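/- arXiv:2406.12855 — 3 statements merged into one kernel-verified Lean document; each statement's English description precedes it below -/
import Mathlib

section
/- Let ψ : ℝ⁴ → Cl be differentiable with ∂_μψ(x) = K_μ(x)·ψ(x) for all x and all μ ∈ {0,1,2,3}, where K_μ(x) := (1/4)·Σ_{I,J=0}^{9} W_μ^{IJ}(x)·e_I·e_J for differentiable functions W_μ^{IJ} : ℝ⁴ → ℝ satisfying W_μ^{IJ} = −W_μ^{JI}. Then for every I ∈ {0,…,9} and every μ ∈ {0,1,2,3}, the map x ↦ reverse(ψ(x))·e_I·ψ(x) is differentiable and ∂_μ( reverse(ψ)·e_I·ψ ) = Σ_{K=0}^{9} ( Σ_{J=0}^{9} η_{IJ}·W_μ^{JK} ) · reverse(ψ)·e_K·ψ. (That is, the deformed frame e_I ↦ reverse(ψ)e_Iψ satisfies the Cartan moving-frame equation d𝐞_I = ω_I^J 𝐞_J with connection coefficients ω_{μI}^K = Σ_J η_{IJ}W_μ^{JK}.) -/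
open CliffordAlgebra

noncomputable section

/-- The Minkowski signs `(-1,1,…,1)` on `ℝ^{10}`. -/
def ηv : Fin 10 → ℝ := fun I => if I = 0 then -1 else 1

/-- The Minkowski metric `η = diag(-1,1,…,1)` as a matrix. -/
def ηm : Fin 10 → Fin 10 → ℝ := fun I J => if I = J then ηv I else 0

/-- The Minkowski quadratic form `Q(x) = -x₀² + x₁² + ⋯ + x₉²` on `ℝ^{10}`. -/
def Qm : QuadraticForm ℝ (Fin 10 → ℝ) := QuadraticMap.weightedSumSquares ℝ ηv

/-- The Clifford algebra of the Minkowski form on `ℝ^{10}`. -/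
abbrev Cl := CliffordAlgebra Qm

/-- The images `e_I` of the standard basis vectors of `ℝ^{10}` in `Cl`. -/
def e (I : Fin 10) : Cl := ι Qm (Pi.single I 1)

/-- Inclusion of tangent indices `{0,…,3}` into `{0,…,9}`. -/
def tIdx (μ : Fin 4) : Fin 10 := ⟨μ.1, by omega⟩

/-- Inclusion of normal indices `{4,…,9}` into `{0,…,9}`. -/
def nIdx (i : Fin 6) : Fin 10 := ⟨i.1 + 4, by omega⟩

lemma Qm_single (i : Fin 10) (c : ℝ) : Qm (Pi.single i c) = ηv i * (c * c) := by
  rw [Qm, QuadraticMap.weightedSumSquares_apply]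
  rw [Finset.sum_eq_single i]
  · simp
  · intro b _ hb; simp [Pi.single_apply, hb]
  · simp

lemma polar_single (i j : Fin 10) :
    QuadraticMap.polar Qm (Pi.single i 1) (Pi.single j 1) = 2 * ηm i j := by
  rcases eq_or_ne i j with rfl | h
  · rw [QuadraticMap.polar, ← Pi.single_add, Qm_single, Qm_single, ηm]
    simp; ring
  · rw [QuadraticMap.polar, Qm, QuadraticMap.weightedSumSquares_apply,
      QuadraticMap.weightedSumSquares_apply, QuadraticMap.weightedSumSquares_apply]
    rw [← Finset.sum_sub_distrib, ← Finset.sum_sub_distrib]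
    rw [Finset.sum_eq_zero, ηm, if_neg h, mul_zero]
    intro k _
    rcases eq_or_ne i k with rfl | hik
    · simp [Pi.single_apply, h]
    · rcases eq_or_ne j k with rfl | hjk
      · simp [Pi.single_apply, hik.symm, Ne.symm hik]
      · simp [Pi.single_apply, Ne.symm hik, Ne.symm hjk]

lemma e_mul_e_add (i j : Fin 10) :
    e i * e j + e j * e i = algebraMap ℝ Cl (2 * ηm i j) := by
  rw [e, e, ι_mul_ι_add_swap, polar_single]

lemma e_sq (i : Fin 10) : e i * e i = algebraMap ℝ Cl (ηv i) := by
  rw [e, ι_sq_scalar, Qm_single]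
  norm_num

lemma e_anticomm {i j : Fin 10} (h : i ≠ j) : e i * e j = - (e j * e i) := by
  have := e_mul_e_add i j
  rw [ηm, if_neg h, mul_zero, map_zero] at this
  linear_combination (norm := noncomm_ring) this

/-- Products of `e`'s over sorted index sets. -/
def Fp (S : Finset (Fin 10)) : Cl := ((S.sort (·≤·)).map e).prod

def Nsp : Submodule ℝ Cl := Submodule.span ℝ (Set.range Fp)

lemma Fp_empty : Fp ∅ = 1 := by simp [Fp]

lemma Fp_insert_of_lt {j : Fin 10} {S : Finset (Fin 10)} (h : ∀ k ∈ S, j < k) :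
    Fp (insert j S) = e j * Fp S := by
  have hj : j ∉ S := fun hm => lt_irrefl j (h j hm)
  rw [Fp, Finset.sort_insert _ (fun b hb => (h b hb).le) hj, List.map_cons, List.prod_cons, Fp]

lemma Fp_singleton (i : Fin 10) : Fp {i} = e i := by
  have : ({i} : Finset (Fin 10)) = insert i ∅ := rfl
  rw [this, Fp_insert_of_lt (by simp), Fp_empty, mul_one]

lemma keyA : ∀ (n : ℕ) (S : Finset (Fin 10)), S.card ≤ n → ∀ i : Fin 10,
    e i * Fp S ∈ Submodule.span ℝ (Fp '' {T : Finset (Fin 10) | T ⊆ insert i S}) := by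
  intro n
  induction n with
  | zero =>
    intro S hS i
    rw [Finset.card_eq_zero.mp (Nat.le_zero.mp hS), Fp_empty, mul_one, ← Fp_singleton i]
    exact Submodule.subset_span ⟨{i}, by simp, rfl⟩
  | succ n ih =>
    intro S hS i
    rcases S.eq_empty_or_nonempty with rfl | hne
    · rw [Fp_empty, mul_one, ← Fp_singleton i]
      exact Submodule.subset_span ⟨{i}, by simp, rfl⟩
    · set j := S.min' hne with hj
      have hjS : j ∈ S := S.min'_mem hne
      set S' := S.erase j with hS'
      have hSS : S = insert j S' := by rw [hS', Finset.insert_erase hjS]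
      have hjlt : ∀ k ∈ S', j < k := fun k hk =>
        lt_of_le_of_ne (S.min'_le k (Finset.mem_of_mem_erase hk))
          (Ne.symm (Finset.ne_of_mem_erase hk))
      have hFS : Fp S = e j * Fp S' := by rw [hSS, Fp_insert_of_lt hjlt]
      have hcard : S'.card ≤ n := by
        have h1 : (S.erase j).card = S.card - 1 := Finset.card_erase_of_mem hjS
        have h2 : 0 < S.card := Finset.card_pos.mpr hne
        rw [← hS'] at h1
        omega
      rcases lt_trichotomy i j with hij | rfl | hij
      · -- i < j : prepend
        have hilt : ∀ k ∈ S, i < k := fun k hk => lt_of_lt_of_le hij (S.min'_le k hk)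
        rw [← Fp_insert_of_lt hilt]
        exact Submodule.subset_span ⟨insert i S, Finset.Subset.refl _, rfl⟩
      · -- i = j : square
        rw [hFS, ← mul_assoc, e_sq, ← Algebra.smul_def]
        refine Submodule.smul_mem _ _ (Submodule.subset_span ⟨S', ?_, rfl⟩)
        exact fun k hk => Finset.mem_insert_of_mem (Finset.mem_of_mem_erase hk)
      · -- j < i : anticommute
        have hmem := ih S' hcard i
        have hmap : e i * Fp S = -(e j * (e i * Fp S')) := by
          rw [hFS, ← mul_assoc, e_anticomm (ne_of_gt hij), neg_mul, mul_assoc]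
        rw [hmap]
        refine Submodule.neg_mem _ ?_
        have hle : Submodule.map (LinearMap.mulLeft ℝ (e j))
            (Submodule.span ℝ (Fp '' {T : Finset (Fin 10) | T ⊆ insert i S'}))
            ≤ Submodule.span ℝ (Fp '' {T : Finset (Fin 10) | T ⊆ insert i S}) := by
          rw [Submodule.map_span, Submodule.span_le]
          rintro _ ⟨_, ⟨T, hT, rfl⟩, rfl⟩
          have hjT : ∀ k ∈ T, j < k := by
            intro k hk
            rcases Finset.mem_insert.mp (hT hk) with rfl | hk'
            · exact hij
            · exact hjlt k hk'
          have : LinearMap.mulLeft ℝ (e j) (Fp T) = Fp (insert j T) := by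
            simp [LinearMap.mulLeft_apply, Fp_insert_of_lt hjT]
          rw [this]
          refine Submodule.subset_span ⟨insert j T, ?_, rfl⟩
          intro k hk
          rcases Finset.mem_insert.mp hk with rfl | hk'
          · rw [hSS]; exact Finset.mem_insert_of_mem (Finset.mem_insert_self _ _)
          · rcases Finset.mem_insert.mp (hT hk') with rfl | hk''
            · exact Finset.mem_insert_self _ _
            · rw [hSS]
              exact Finset.mem_insert_of_mem (Finset.mem_insert_of_mem hk'')
        exact hle (Submodule.mem_map_of_mem hmem)

lemma e_mul_mem {i : Fin 10} {x : Cl} (hx : x ∈ Nsp) : e i * x ∈ Nsp := by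
  refine Submodule.span_induction ?_ ?_ ?_ ?_ hx
  · rintro _ ⟨S, rfl⟩
    have := keyA S.card S le_rfl i
    refine Submodule.span_le.mpr ?_ this
    rintro _ ⟨T, _, rfl⟩
    exact Submodule.subset_span ⟨T, rfl⟩
  · simp
  · intro a b _ _ ha hb; rw [mul_add]; exact Submodule.add_mem _ ha hb
  · intro c a _ ha; rw [mul_smul_comm]; exact Submodule.smul_mem _ _ ha

lemma listprod_mul_mem (l : List (Fin 10)) {x : Cl} (hx : x ∈ Nsp) :
    (l.map e).prod * x ∈ Nsp := by
  induction l with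
  | nil => simpa using hx
  | cons a t ih => rw [List.map_cons, List.prod_cons, mul_assoc]; exact e_mul_mem ih

lemma Nsp_eq_top : Nsp = ⊤ := by
  rw [eq_top_iff]
  intro x hx
  clear hx
  induction x using CliffordAlgebra.induction with
  | algebraMap r =>
    rw [Algebra.algebraMap_eq_smul_one, ← Fp_empty]
    exact Submodule.smul_mem _ _ (Submodule.subset_span ⟨∅, rfl⟩)
  | ι v =>
    have hv : v = ∑ i, Pi.single i (v i) := (Finset.univ_sum_single v).symm
    rw [hv, map_sum]
    refine Submodule.sum_mem _ fun i _ => ?_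
    have : (Pi.single i (v i) : Fin 10 → ℝ) = v i • (Pi.single i 1 : Fin 10 → ℝ) := by
      rw [← Pi.single_smul, smul_eq_mul, mul_one]
    rw [this, map_smul]
    exact Submodule.smul_mem _ _ (Submodule.subset_span ⟨{i}, Fp_singleton i⟩)
  | mul a b ha hb =>
    refine Submodule.span_induction ?_ ?_ ?_ ?_ ha
    · rintro _ ⟨S, rfl⟩; exact listprod_mul_mem _ hb
    · simp
    · intro p q _ _ hp hq; rw [add_mul]; exact Submodule.add_mem _ hp hq
    · intro c p _ hp; rw [smul_mul_assoc]; exact Submodule.smul_mem _ _ hp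
  | add a b ha hb => exact Submodule.add_mem _ ha hb

instance : Module.Finite ℝ Cl :=
  ⟨Submodule.fg_def.mpr ⟨Set.range Fp, Set.finite_range _, Nsp_eq_top⟩⟩

lemma reverse_e (A : Fin 10) : reverse (Q := Qm) (e A) = e A := by rw [e, reverse_ι]

lemma comm_eI (I A B : Fin 10) :
    e I * (e A * e B) - (e A * e B) * e I = (2 * ηm I A) • e B - (2 * ηm I B) • e A := by
  have hA : e I * e A = algebraMap ℝ Cl (2 * ηm I A) - e A * e I := by
    rw [← e_mul_e_add I A]; abel
  have hB : e I * e B = algebraMap ℝ Cl (2 * ηm I B) - e B * e I := by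
    rw [← e_mul_e_add I B]; abel
  have h1 : e I * (e A * e B) = algebraMap ℝ Cl (2 * ηm I A) * e B
      - e A * (algebraMap ℝ Cl (2 * ηm I B)) + e A * e B * e I := by
    rw [← mul_assoc, hA, sub_mul, mul_assoc, hB, mul_sub]
    noncomm_ring
  rw [h1, ← Algebra.smul_def, ← Algebra.commutes, ← Algebra.smul_def]
  abel

lemma Ksum_comm (I : Fin 10) (w : Fin 10 → Fin 10 → ℝ) (hw : ∀ A B, w A B = - w B A) :
    e I * ((1/4:ℝ) • ∑ A, ∑ B, w A B • (e A * e B))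
      - ((1/4:ℝ) • ∑ A, ∑ B, w A B • (e A * e B)) * e I
    = ∑ k, (ηv I * w I k) • e k := by
  rw [mul_smul_comm, smul_mul_assoc, ← smul_sub]
  have h1 : e I * (∑ A, ∑ B, w A B • (e A * e B))
      - (∑ A, ∑ B, w A B • (e A * e B)) * e I
      = ∑ A, ∑ B, ((w A B * (2 * ηm I A)) • e B - (w A B * (2 * ηm I B)) • e A) := by
    rw [Finset.mul_sum, Finset.sum_mul, ← Finset.sum_sub_distrib]
    refine Finset.sum_congr rfl fun A _ => ?_
    rw [Finset.mul_sum, Finset.sum_mul, ← Finset.sum_sub_distrib]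
    refine Finset.sum_congr rfl fun B _ => ?_
    rw [mul_smul_comm, smul_mul_assoc, ← smul_sub, comm_eI, smul_sub,
      smul_smul, smul_smul]
  rw [h1]
  have h2 : ∀ A : Fin 10, ∑ B : Fin 10, ((w A B * (2 * ηm I A)) • e B - (w A B * (2 * ηm I B)) • e A)
      = (∑ B : Fin 10, (w A B * (2 * ηm I A)) • e B) - ∑ B : Fin 10, (w A B * (2 * ηm I B)) • e A :=
    fun A => Finset.sum_sub_distrib _ _
  rw [Finset.sum_congr rfl (fun A _ => h2 A), Finset.sum_sub_distrib]
  have P1 : (∑ A : Fin 10, ∑ B : Fin 10, (w A B * (2 * ηm I A)) • e B)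
      = ∑ k : Fin 10, (2 * (ηv I * w I k)) • e k := by
    rw [Finset.sum_eq_single I]
    · refine Finset.sum_congr rfl fun B _ => ?_
      rw [ηm, if_pos rfl]; congr 1; ring
    · intro A _ hA
      refine Finset.sum_eq_zero fun B _ => ?_
      rw [ηm, if_neg (fun h => hA h.symm)]; simp
    · intro h; exact absurd (Finset.mem_univ I) h
  have P2 : (∑ A : Fin 10, ∑ B : Fin 10, (w A B * (2 * ηm I B)) • e A)
      = ∑ k : Fin 10, (-(2 * (ηv I * w I k))) • e k := by
    rw [Finset.sum_comm, Finset.sum_eq_single I]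
    · refine Finset.sum_congr rfl fun A _ => ?_
      rw [ηm, if_pos rfl, hw A I]; congr 1; ring
    · intro B _ hB
      refine Finset.sum_eq_zero fun A _ => ?_
      rw [ηm, if_neg (fun h => hB h.symm)]; simp
    · intro h; exact absurd (Finset.mem_univ I) h
  rw [P1, P2, ← Finset.sum_sub_distrib, Finset.smul_sum]
  refine Finset.sum_congr rfl fun k _ => ?_
  rw [← sub_smul, smul_smul]
  congr 1; ring

lemma Krev (w : Fin 10 → Fin 10 → ℝ) (hw : ∀ A B, w A B = - w B A) :
    reverse (Q := Qm) ((1/4:ℝ) • ∑ A, ∑ B, w A B • (e A * e B))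
      = -((1/4:ℝ) • ∑ A, ∑ B, w A B • (e A * e B)) := by
  rw [map_smul, map_sum]
  have h1 : ∀ A : Fin 10, reverse (Q := Qm) (∑ B, w A B • (e A * e B))
      = ∑ B, w A B • (e B * e A) := by
    intro A
    rw [map_sum]
    refine Finset.sum_congr rfl fun B _ => ?_
    rw [map_smul, reverse.map_mul, reverse_e, reverse_e]
  rw [Finset.sum_congr rfl (fun A _ => h1 A)]
  have h2 : (∑ A : Fin 10, ∑ B : Fin 10, w A B • (e B * e A))
      = - ∑ A : Fin 10, ∑ B : Fin 10, w A B • (e A * e B) := by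
    rw [Finset.sum_comm, ← Finset.sum_neg_distrib]
    refine Finset.sum_congr rfl fun A _ => ?_
    rw [← Finset.sum_neg_distrib]
    refine Finset.sum_congr rfl fun B _ => ?_
    rw [hw B A, neg_smul]
  rw [h2, smul_neg]

lemma main_alg (I : Fin 10) (w : Fin 10 → Fin 10 → ℝ) (hw : ∀ A B, w A B = - w B A)
    (P : Cl) :
    (reverse (Q := Qm) (((1/4:ℝ) • ∑ A, ∑ B, w A B • (e A * e B)) * P)) * e I * P
      + reverse (Q := Qm) P * e I * ((((1/4:ℝ) • ∑ A, ∑ B, w A B • (e A * e B))) * P)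
    = ∑ k, (ηv I * w I k) • (reverse (Q := Qm) P * e k * P) := by
  set K : Cl := (1/4:ℝ) • ∑ A, ∑ B, w A B • (e A * e B) with hK
  have hrev : reverse (Q := Qm) (K * P) = reverse (Q := Qm) P * (-K) := by
    rw [reverse.map_mul, Krev w hw]
  rw [hrev]
  have hstep : reverse (Q := Qm) P * (-K) * e I * P + reverse (Q := Qm) P * e I * (K * P)
      = reverse (Q := Qm) P * (e I * K - K * e I) * P := by
    noncomm_ring
  rw [hstep, Ksum_comm I w hw, Finset.mul_sum, Finset.sum_mul]
  refine Finset.sum_congr rfl fun k _ => ?_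
  rw [mul_smul_comm, smul_mul_assoc, mul_assoc]

lemma coeff_eq (I k : Fin 10) (f : Fin 10 → ℝ) : ∑ J : Fin 10, ηm I J * f J = ηv I * f I := by
  rw [Finset.sum_eq_single I]
  · rw [ηm, if_pos rfl]
  · intro J _ hJ; rw [ηm, if_neg (fun h => hJ h.symm), zero_mul]
  · intro h; exact absurd (Finset.mem_univ I) h


/-- If `ψ : ℝ⁴ → Cl` satisfies `∂_μψ = K_μψ` with `K_μ = (1/4)·Σ_{I,J} W_μ^{IJ} e_I e_J`
for antisymmetric `W`, then the deformed frame `e_I ↦ reverse(ψ)·e_I·ψ` is differentiable and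
satisfies the Cartan moving-frame equation with connection `ω_{μI}^K = Σ_J η_{IJ} W_μ^{JK}`. -/
theorem stmt_0 (nCl : AddGroupNorm Cl)
    (hns : ∀ (c : ℝ) (x : Cl), nCl (c • x) ≤ ‖c‖ * nCl x) :
    letI : NormedAddCommGroup Cl := nCl.toNormedAddCommGroup
    letI : NormedSpace ℝ Cl := { norm_smul_le := hns }
    ∀ (ψ : (Fin 4 → ℝ) → Cl) (W : Fin 4 → Fin 10 → Fin 10 → (Fin 4 → ℝ) → ℝ),
      Differentiable ℝ ψ →
      (∀ μ I J, Differentiable ℝ (W μ I J)) →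
      (∀ μ I J x, W μ I J x = - W μ J I x) →
      (∀ μ x, fderiv ℝ ψ x (Pi.single μ 1) =
        ((1/4 : ℝ) • ∑ I : Fin 10, ∑ J : Fin 10, W μ I J x • (e I * e J)) * ψ x) →
      ∀ (I : Fin 10) (μ : Fin 4),
        Differentiable ℝ (fun y => reverse (Q := Qm) (ψ y) * e I * ψ y) ∧
        ∀ x, fderiv ℝ (fun y => reverse (Q := Qm) (ψ y) * e I * ψ y) x (Pi.single μ 1) =
          ∑ K : Fin 10, (∑ J : Fin 10, ηm I J * W μ J K x) •
            (reverse (Q := Qm) (ψ x) * e K * ψ x) := by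
  intro ψ W hψ hWd hanti hD I μ
  letI : NormedAddCommGroup Cl := nCl.toNormedAddCommGroup
  letI : NormedSpace ℝ Cl := { norm_smul_le := hns }
  let R : Cl →L[ℝ] Cl := LinearMap.toContinuousLinearMap (reverse (Q := Qm))
  let Bmul : Cl →L[ℝ] Cl →L[ℝ] Cl := LinearMap.toContinuousLinearMap
    { toFun := fun a => LinearMap.toContinuousLinearMap (LinearMap.mulLeft ℝ a),
      map_add' := by intro a b; ext c; simp [add_mul],
      map_smul' := by intro m a; ext c; simp [smul_mul_assoc] }
  have hB : ∀ a b : Cl, Bmul a b = a * b := fun a b => rfl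
  let L : Cl →L[ℝ] Cl := (Bmul.flip (e I)).comp R
  have hL : ∀ a : Cl, L a = reverse (Q := Qm) a * e I := fun a => rfl
  let c : (Fin 4 → ℝ) → (Cl →L[ℝ] Cl) := fun y => (Bmul.comp L) (ψ y)
  have hcd : Differentiable ℝ c := (Bmul.comp L).differentiable.comp hψ
  have hfun : (fun y => reverse (Q := Qm) (ψ y) * e I * ψ y) = fun y => c y (ψ y) := by
    funext y; rfl
  constructor
  · rw [hfun]; exact hcd.clm_apply hψ
  · intro x
    have hψx : HasFDerivAt ψ (fderiv ℝ ψ x) x := (hψ x).hasFDerivAt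
    have hcx : HasFDerivAt c ((Bmul.comp L).comp (fderiv ℝ ψ x)) x :=
      ((Bmul.comp L).hasFDerivAt).comp x hψx
    have hder := hcx.clm_apply hψx
    rw [hfun, hder.fderiv]
    simp only [ContinuousLinearMap.add_apply, ContinuousLinearMap.comp_apply,
      ContinuousLinearMap.flip_apply, ContinuousLinearMap.coe_comp', Function.comp_apply]
    rw [hD μ x]
    simp only [hB, hL, c]
    have hma := main_alg I (fun A B => W μ A B x) (fun A B => hanti μ A B x) (ψ x)
    have hco : ∀ k : Fin 10, (∑ J : Fin 10, ηm I J * W μ J k x) = ηv I * W μ I k x :=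
      fun k => coeff_eq I k _
    simp only [hco]
    rw [add_comm]
    exact hma
end
end

section
/- Let u, v ∈ M with Q(u) = 1, Q(v) = 1 and polar(u,v) = 0, and for θ ∈ ℝ set R(θ) := cos(θ/2)·1 + sin(θ/2)·ι(u)ι(v) ∈ CliffordAlgebra Q. Then reverse(R(θ))·R(θ) = 1 and reverse(R(θ))·ι(u)·R(θ) = cos(θ)·ι(u) + sin(θ)·ι(v). (The bivector ι(u)ι(v) generates the rotation of the (u,v)-plane by angle θ.) -/
open CliffordAlgebra

/-- For orthogonal unit vectors `u, v`, the rotor `R(θ) = cos(θ/2)·1 + sin(θ/2)·ι(u)ι(v)`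
is normalized and rotates `ι(u)` by angle `θ` in the `(u,v)`-plane. -/
theorem stmt_13 {M : Type*} [AddCommGroup M] [Module ℝ M] (Q : QuadraticForm ℝ M)
    (u v : M) (hu : Q u = 1) (hv : Q v = 1) (huv : QuadraticMap.polar Q u v = 0)
    (R : ℝ → CliffordAlgebra Q)
    (hR : ∀ θ : ℝ, R θ =
      Real.cos (θ / 2) • (1 : CliffordAlgebra Q) + Real.sin (θ / 2) • (ι Q u * ι Q v)) :
    ∀ θ : ℝ,
      reverse (Q := Q) (R θ) * R θ = 1 ∧
      reverse (Q := Q) (R θ) * ι Q u * R θ = Real.cos θ • ι Q u + Real.sin θ • ι Q v := by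
  intro θ
  have hRθ := hR θ
  have hcos : Real.cos θ = Real.cos (θ / 2) * Real.cos (θ / 2) - Real.sin (θ / 2) * Real.sin (θ / 2) := by
    have h := Real.cos_two_mul (θ / 2)
    rw [show 2 * (θ / 2) = θ by ring] at h
    nlinarith [Real.sin_sq_add_cos_sq (θ / 2)]
  have hsin : Real.sin θ = 2 * (Real.sin (θ / 2) * Real.cos (θ / 2)) := by
    have h := Real.sin_two_mul (θ / 2)
    rw [show 2 * (θ / 2) = θ by ring] at h
    linarith [h]
  have hpyth : Real.cos (θ / 2) * Real.cos (θ / 2) + Real.sin (θ / 2) * Real.sin (θ / 2) = 1 := by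
    nlinarith [Real.sin_sq_add_cos_sq (θ / 2)]
  set c := Real.cos (θ / 2) with hc
  set s := Real.sin (θ / 2) with hs
  clear_value c s
  have h1 : ι Q u * ι Q u = 1 := by rw [ι_sq_scalar, hu, map_one]
  have h2 : ι Q v * ι Q v = 1 := by rw [ι_sq_scalar, hv, map_one]
  have hadd : ι Q u * ι Q v + ι Q v * ι Q u = 0 := by
    rw [CliffordAlgebra.ι_mul_ι_add_swap, huv, map_zero]
  have h3 : ι Q v * ι Q u = -(ι Q u * ι Q v) := by
    rw [eq_neg_iff_add_eq_zero, add_comm]; exact hadd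
  have hb : (ι Q u * ι Q v) * (ι Q u * ι Q v) = -1 := by
    calc (ι Q u * ι Q v) * (ι Q u * ι Q v)
        = ι Q u * (ι Q v * ι Q u) * ι Q v := by noncomm_ring
      _ = -1 := by rw [h3]; simp only [mul_neg, neg_mul, ← mul_assoc, h1, one_mul, h2]
  have hub : ι Q u * (ι Q u * ι Q v) = ι Q v := by rw [← mul_assoc, h1, one_mul]
  have hbu : (ι Q u * ι Q v) * ι Q u = -ι Q v := by
    rw [mul_assoc, h3, mul_neg, hub]
  have hvb : ι Q v * (ι Q u * ι Q v) = -ι Q u := by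
    rw [← mul_assoc, h3, neg_mul, mul_assoc, h2, mul_one]
  have hrev : reverse (Q := Q) (R θ) = c • (1 : CliffordAlgebra Q) - s • (ι Q u * ι Q v) := by
    rw [hRθ]
    simp only [map_add, map_smul, reverse.map_one, reverse.map_mul, reverse_ι, h3,
      smul_neg, sub_eq_add_neg]
  constructor
  · rw [hrev, hRθ]
    simp only [sub_mul, mul_add, smul_mul_assoc, mul_smul_comm, smul_smul, hb,
      one_mul, mul_one, smul_neg]
    match_scalars <;>
      first
        | linear_combination hpyth
        | linear_combination -hpyth
        | linear_combination 2*hpyth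
        | linear_combination -2*hpyth
        | linear_combination hcos
        | linear_combination -hcos
        | linear_combination hsin
        | linear_combination -hsin
        | linear_combination hcos + hsin
        | linear_combination hcos - hsin
        | linear_combination -hcos - hsin
        | linear_combination -hcos + hsin
        | linear_combination hcos + hpyth
        | linear_combination hcos - hpyth
        | linear_combination -hcos + hpyth
        | linear_combination -hcos - hpyth
        | nlinarith [hcos, hsin, hpyth, sq_nonneg c, sq_nonneg s]
  · rw [hrev, hRθ]
    simp only [sub_mul, add_mul, mul_add, smul_mul_assoc, mul_smul_comm, smul_smul,
      hub, hbu, hvb, hb, one_mul, mul_one, smul_neg, mul_neg, neg_mul, neg_neg]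
    match_scalars <;>
      first
        | linear_combination hpyth
        | linear_combination -hpyth
        | linear_combination 2*hpyth
        | linear_combination -2*hpyth
        | linear_combination hcos
        | linear_combination -hcos
        | linear_combination hsin
        | linear_combination -hsin
        | linear_combination hcos + hsin
        | linear_combination hcos - hsin
        | linear_combination -hcos - hsin
        | linear_combination -hcos + hsin
        | linear_combination hcos + hpyth
        | linear_combination hcos - hpyth
        | linear_combination -hcos + hpyth
        | linear_combination -hcos - hpyth
        | nlinarith [hcos, hsin, hpyth, sq_nonneg c, sq_nonneg s]
end

section
/- For x = (x₀,x₁,x₂,x₃) ∈ ℝ⁴ write r² := x₁² + x₂² + x₃², and define the immersion q : ℝ⁴ → ℝ^{10} by q(x) := x₀·b₀ + (1+r²)^{−1}·( x₁·b₁ + x₂·b₂ + x₃·b₃ + b₅ ). Then the pullback of the Minkowski bilinear form B along q is the diagonal metric g = diag(−1, (1+r²)^{−2}, (1+r²)^{−2}, (1+r²)^{−2}); that is, for all x ∈ ℝ⁴ and all μ, ν ∈ {0,1,2,3}: B( ∂_μ q(x), ∂_ν q(x) ) = −1 if μ = ν = 0, = (1+r²)^{−2} if μ = ν ∈ {1,2,3},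 and = 0 if μ ≠ ν. -/
noncomputable section

/-- The Minkowski bilinear form `B(x,y) = −x₀y₀ + Σ_{k=1}^{9} x_k y_k` on `ℝ^{10}`. -/
def B (x y : Fin 10 → ℝ) : ℝ := ∑ I : Fin 10, ηv I * x I * y I

/-- The standard basis vectors `b_I` of `ℝ^{10}`. -/
def bvec (I : Fin 10) : Fin 10 → ℝ := Pi.single I 1

/-- `r² = x₁² + x₂² + x₃²`. -/
def r2 (x : Fin 4 → ℝ) : ℝ := (x 1) ^ 2 + (x 2) ^ 2 + (x 3) ^ 2

/-- The immersion `q(x) = x₀b₀ + (1+r²)⁻¹(x₁b₁ + x₂b₂ + x₃b₃ + b₅)` of `ℝ⁴` in `ℝ^{10}`. -/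
def q19 (x : Fin 4 → ℝ) : Fin 10 → ℝ :=
  x 0 • bvec 0 + (1 + r2 x)⁻¹ • (x 1 • bvec 1 + x 2 • bvec 2 + x 3 • bvec 3 + bvec 5)

def Pm (i : Fin 4) : (Fin 4 → ℝ) →L[ℝ] ℝ := ContinuousLinearMap.proj i

def Dr2 (x : Fin 4 → ℝ) : (Fin 4 → ℝ) →L[ℝ] ℝ :=
  (2 * x 1) • Pm 1 + (2 * x 2) • Pm 2 + (2 * x 3) • Pm 3

def DInv (x : Fin 4 → ℝ) : (Fin 4 → ℝ) →L[ℝ] ℝ := (-((1 + r2 x) ^ 2)⁻¹) • Dr2 x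

def Dc (x : Fin 4 → ℝ) (i : Fin 4) : (Fin 4 → ℝ) →L[ℝ] ℝ :=
  (1 + r2 x)⁻¹ • Pm i + x i • DInv x

def Lq (x : Fin 4 → ℝ) : (Fin 4 → ℝ) →L[ℝ] (Fin 10 → ℝ) :=
  ContinuousLinearMap.pi (fun I : Fin 10 =>
    if I = 0 then Pm 0 else if I = 1 then Dc x 1 else if I = 2 then Dc x 2
    else if I = 3 then Dc x 3 else if I = 5 then DInv x else 0)

lemma s_ne (x : Fin 4 → ℝ) : 1 + r2 x ≠ 0 := by
  have : (0:ℝ) ≤ r2 x := by unfold r2; positivity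
  linarith

lemma hr2 (x : Fin 4 → ℝ) : HasFDerivAt r2 (Dr2 x) x := by
  have h : ∀ i : Fin 4, HasFDerivAt (fun y : Fin 4 → ℝ => (y i) ^ 2) ((2 * x i) • Pm i) x := by
    intro i
    have := (hasFDerivAt_apply (𝕜 := ℝ) i x).mul (hasFDerivAt_apply (𝕜 := ℝ) i x)
    have e1 : (fun y : Fin 4 → ℝ => (y i) ^ 2) = (fun f => f i) * (fun f => f i) := by
      ext y; simp [sq]
    have e2 : (2 * x i) • Pm i = x i • ContinuousLinearMap.proj (R := ℝ) (φ := fun _ : Fin 4 => ℝ) i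
        + x i • ContinuousLinearMap.proj i := by
      ext v; simp [Pm]; ring
    rw [e1, e2]; exact this
  have := ((h 1).add (h 2)).add (h 3)
  exact this

lemma hinv (x : Fin 4 → ℝ) : HasFDerivAt (fun y => (1 + r2 y)⁻¹) (DInv x) x := by
  have hs : HasFDerivAt (fun y => 1 + r2 y) (Dr2 x) x := (hr2 x).const_add 1
  have hi : HasFDerivAt Inv.inv
      ((1 : ℝ →L[ℝ] ℝ).smulRight (-((1 + r2 x) ^ 2)⁻¹)) (1 + r2 x) :=
    (hasDerivAt_inv (s_ne x)).hasFDerivAt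
  have := hi.comp x hs
  have e : DInv x = (1 : ℝ →L[ℝ] ℝ).smulRight (-((1 + r2 x) ^ 2)⁻¹) ∘L Dr2 x := by
    ext v
    simp [DInv, mul_comm]
  rw [e]; exact this

lemma hcomp (x : Fin 4 → ℝ) (i : Fin 4) :
    HasFDerivAt (fun y => (1 + r2 y)⁻¹ * y i) (Dc x i) x := by
  have := (hinv x).mul (hasFDerivAt_apply (𝕜 := ℝ) i x)
  exact this

lemma hq19 (x : Fin 4 → ℝ) : HasFDerivAt q19 (Lq x) x := by
  have key : HasFDerivAt (fun (y : Fin 4 → ℝ) (I : Fin 10) =>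
      if I = 0 then y 0 else if I = 1 then (1 + r2 y)⁻¹ * y 1
      else if I = 2 then (1 + r2 y)⁻¹ * y 2 else if I = 3 then (1 + r2 y)⁻¹ * y 3
      else if I = 5 then (1 + r2 y)⁻¹ else 0) (Lq x) x := by
    apply hasFDerivAt_pi.2
    intro I
    fin_cases I <;>
      simp only [Fin.isValue, show ((0:Fin 10) ≠ 1) by decide, if_true, if_false,
        reduceIte] <;>
      first
        | exact hasFDerivAt_apply 0 x
        | exact hcomp x _
        | exact hinv x
        | exact hasFDerivAt_const 0 x
  convert key using 2 with y
  funext I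
  fin_cases I <;> simp [q19, bvec, Pi.single_apply]
def dval (s : ℝ) (x : Fin 4 → ℝ) (μ : Fin 4) (I : Fin 10) : ℝ :=
  if I = 0 then (if μ = 0 then 1 else 0)
  else if I = 1 then (if μ = 1 then s⁻¹ else 0)
    - x 1 * (if μ = 0 then (0:ℝ) else 2 * x μ) * (s ^ 2)⁻¹
  else if I = 2 then (if μ = 2 then s⁻¹ else 0)
    - x 2 * (if μ = 0 then (0:ℝ) else 2 * x μ) * (s ^ 2)⁻¹
  else if I = 3 then (if μ = 3 then s⁻¹ else 0)
    - x 3 * (if μ = 0 then (0:ℝ) else 2 * x μ) * (s ^ 2)⁻¹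
  else if I = 5 then -(if μ = 0 then (0:ℝ) else 2 * x μ) * (s ^ 2)⁻¹
  else 0

set_option maxHeartbeats 2000000 in
lemma Lq_single (x : Fin 4 → ℝ) (μ : Fin 4) :
    Lq x (Pi.single μ 1) = dval (1 + r2 x) x μ := by
  funext I
  fin_cases μ <;> fin_cases I <;>
  · simp only [Lq, ContinuousLinearMap.pi_apply]
    simp [Dc, DInv, Dr2, Pm, Pi.single_apply, dval]
    try ring

lemma sum10 (f : Fin 10 → ℝ) :
    ∑ I, f I = f 0 + f 1 + f 2 + f 3 + f 4 + f 5 + f 6 + f 7 + f 8 + f 9 := by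
  rw [Fin.sum_univ_castSucc, Fin.sum_univ_castSucc, Fin.sum_univ_eight]
  rfl

lemma Bdval (x : Fin 4 → ℝ) (s : ℝ) (hs : s ≠ 0)
    (hsx : s = 1 + ((x 1) ^ 2 + (x 2) ^ 2 + (x 3) ^ 2)) (μ ν : Fin 4) :
    B (dval s x μ) (dval s x ν) =
      if μ = ν then (if μ = 0 then (-1 : ℝ) else (s ^ 2)⁻¹) else 0 := by
  fin_cases μ <;> fin_cases ν
  · simp [B, sum10, dval, ηv]
  · simp [B, sum10, dval, ηv]
  · simp [B, sum10, dval, ηv]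
  · simp [B, sum10, dval, ηv]
  · simp [B, sum10, dval, ηv]
  · simp [B, sum10, dval, ηv]; linear_combination (-(4 * x 1 * x 1) / s ^ 4) * hsx + (4 * x 1 * x 1 / s ^ 3) * (mul_inv_cancel₀ hs)
  · simp [B, sum10, dval, ηv]; linear_combination (-(4 * x 1 * x 2) / s ^ 4) * hsx + (4 * x 1 * x 2 / s ^ 3) * (mul_inv_cancel₀ hs)
  · simp [B, sum10, dval, ηv]; linear_combination (-(4 * x 1 * x 3) / s ^ 4) * hsx + (4 * x 1 * x 3 / s ^ 3) * (mul_inv_cancel₀ hs)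
  · simp [B, sum10, dval, ηv]
  · simp [B, sum10, dval, ηv]; linear_combination (-(4 * x 2 * x 1) / s ^ 4) * hsx + (4 * x 2 * x 1 / s ^ 3) * (mul_inv_cancel₀ hs)
  · simp [B, sum10, dval, ηv]; linear_combination (-(4 * x 2 * x 2) / s ^ 4) * hsx + (4 * x 2 * x 2 / s ^ 3) * (mul_inv_cancel₀ hs)
  · simp [B, sum10, dval, ηv]; linear_combination (-(4 * x 2 * x 3) / s ^ 4) * hsx + (4 * x 2 * x 3 / s ^ 3) * (mul_inv_cancel₀ hs)
  · simp [B, sum10, dval, ηv]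
  · simp [B, sum10, dval, ηv]; linear_combination (-(4 * x 3 * x 1) / s ^ 4) * hsx + (4 * x 3 * x 1 / s ^ 3) * (mul_inv_cancel₀ hs)
  · simp [B, sum10, dval, ηv]; linear_combination (-(4 * x 3 * x 2) / s ^ 4) * hsx + (4 * x 3 * x 2 / s ^ 3) * (mul_inv_cancel₀ hs)
  · simp [B, sum10, dval, ηv]; linear_combination (-(4 * x 3 * x 3) / s ^ 4) * hsx + (4 * x 3 * x 3 / s ^ 3) * (mul_inv_cancel₀ hs)


/-- The pullback of the Minkowski bilinear form along `q19` is the diagonal metric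
`g = diag(−1, (1+r²)⁻², (1+r²)⁻², (1+r²)⁻²)`. -/
theorem stmt_19 :
    ∀ (x : Fin 4 → ℝ) (μ ν : Fin 4),
      B (fderiv ℝ q19 x (Pi.single μ 1)) (fderiv ℝ q19 x (Pi.single ν 1)) =
        if μ = ν then (if μ = 0 then (-1 : ℝ) else ((1 + r2 x) ^ 2)⁻¹) else 0 := by
  intro x μ ν
  rw [(hq19 x).fderiv, Lq_single, Lq_single]
  exact Bdval x (1 + r2 x) (s_ne x) (by rw [r2]) μ ν
end
end
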